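/- Every MIF group G is ICC: every conjugacy class of G other than {1} is infinite. -/

import Mathlib

/-- `w ∈ G * F_n` is a mixed identity of `G`: every substitution of elements of `G` for the
free generators (via the homomorphism `G * F_n → G` that is the identity on `G`) kills `w`. -/
def SatisfiesMixedIdentity (G : Type*) [Group G] {n : ℕ}
    (w : Monoid.Coprod G (FreeGroup (Fin n))) : Prop :=
  ∀ g : Fin n → G, Monoid.Coprod.lift (MonoidHom.id G) (FreeGroup.lift g) w = 1

/-- A group is mixed identity free (MIF) if it satisfies no nontrivial mixed identity. -/
def IsMIF (G : Type*) [Group G] : Prop :=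
  ∀ (n : ℕ) (w : Monoid.Coprod G (FreeGroup (Fin n))), SatisfiesMixedIdentity G w → w = 1

private lemma shift_pow_apply (G : Type*) [Group G] (m : ℕ) (f : ℤ → G) (x : ℤ) :
    (((Equiv.arrowCongr (Equiv.addRight (1:ℤ)) (Equiv.refl G)) ^ m) f) x = f (x - m) := by
  induction m generalizing x with
  | zero => simp
  | succ k ih =>
      rw [pow_succ']
      have h : ((Equiv.arrowCongr (Equiv.addRight (1:ℤ)) (Equiv.refl G)) *
          ((Equiv.arrowCongr (Equiv.addRight (1:ℤ)) (Equiv.refl G)) ^ k)) f x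
          = (((Equiv.arrowCongr (Equiv.addRight (1:ℤ)) (Equiv.refl G)) ^ k) f) (x - 1) := rfl
      rw [h, ih]
      congr 1
      push_cast
      ring

/-- Every MIF group is ICC: every conjugacy class other than `{1}` is infinite. -/
theorem icc_of_mif (G : Type*) [Group G] (hmif : IsMIF G) :
    ∀ g : G, g ≠ 1 → {h : G | IsConj g h}.Infinite := by
  intro g hg
  by_contra hfin
  rw [Set.not_infinite] at hfin
  -- the centralizer of g has finite index
  set C : Subgroup G := Subgroup.centralizer {g} with hC
  have hSfin : Finite {h : G | IsConj g h} := hfin.to_subtype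
  have hinj : Function.Injective (fun q : G ⧸ C =>
      Quotient.liftOn' q (fun x => (⟨x * g * x⁻¹, isConj_iff.mpr ⟨x, rfl⟩⟩ : {h : G | IsConj g h}))
        (by
          intro x y hxy
          rw [QuotientGroup.leftRel_apply] at hxy
          have hc : g * (x⁻¹ * y) = (x⁻¹ * y) * g := by
            have := Subgroup.mem_centralizer_iff.mp hxy g (by simp)
            exact this
          ext
          have h2 : x * (g * (x⁻¹ * y)) * y⁻¹ = x * ((x⁻¹ * y) * g) * y⁻¹ := by rw [hc]
          simpa [mul_assoc] using h2)) := by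
    intro q₁ q₂ h
    induction q₁ using Quotient.inductionOn'
    induction q₂ using Quotient.inductionOn'
    rename_i x y
    simp only [Quotient.liftOn'_mk'', Subtype.mk.injEq] at h
    apply Quotient.sound'
    rw [QuotientGroup.leftRel_apply]
    rw [Subgroup.mem_centralizer_iff]
    intro z hz
    rw [Set.mem_singleton_iff] at hz
    rw [hz]
    have : g * (x⁻¹ * y) * g⁻¹ = x⁻¹ * y := by
      have h2 : x⁻¹ * (x * g * x⁻¹) * y * g⁻¹ = x⁻¹ * (y * g * y⁻¹) * y * g⁻¹ := by rw [h]
      calc g * (x⁻¹ * y) * g⁻¹ = x⁻¹ * (x * g * x⁻¹) * y * g⁻¹ := by group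
        _ = x⁻¹ * (y * g * y⁻¹) * y * g⁻¹ := h2
        _ = x⁻¹ * y := by group
    calc g * (x⁻¹ * y) = (g * (x⁻¹ * y) * g⁻¹) * g := by group
      _ = (x⁻¹ * y) * g := by rw [this]
  have hquot : Finite (G ⧸ C) := Finite.of_injective _ hinj
  haveI : C.FiniteIndex := ⟨Subgroup.index_ne_zero_of_finite⟩
  set K : Subgroup G := C.normalCore with hK
  haveI : K.Normal := Subgroup.normalCore_normal C
  haveI : K.FiniteIndex := Subgroup.finiteIndex_normalCore C
  set n : ℕ := K.index with hn
  have hn0 : n ≠ 0 := Subgroup.FiniteIndex.index_ne_zero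
  -- the mixed identity
  set t : Monoid.Coprod G (FreeGroup (Fin 1)) := Monoid.Coprod.inr (FreeGroup.of 0) with ht
  set w : Monoid.Coprod G (FreeGroup (Fin 1)) :=
    Monoid.Coprod.inl g * t ^ n * (Monoid.Coprod.inl g)⁻¹ * (t ^ n)⁻¹ with hw
  have hsat : SatisfiesMixedIdentity G w := by
    intro gs
    have hmem : (gs 0) ^ n ∈ K := Subgroup.pow_index_mem K (gs 0)
    have hcomm : g * (gs 0) ^ n = (gs 0) ^ n * g :=
      Subgroup.mem_centralizer_iff.mp (Subgroup.normalCore_le C hmem) g (by simp)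
    simp only [hw, ht, map_mul, map_inv, map_pow,
      Monoid.Coprod.lift_apply_inl, Monoid.Coprod.lift_apply_inr, MonoidHom.id_apply,
      FreeGroup.lift_apply_of]
    rw [hcomm]
    group
  have hw1 : w = 1 := hmif 1 w hsat
  -- derive a contradiction using an action on `ℤ → G`
  classical
  set b : Equiv.Perm (ℤ → G) := Equiv.arrowCongr (Equiv.addRight (1:ℤ)) (Equiv.refl G) with hb
  set φ : G →* Equiv.Perm (ℤ → G) :=
    (MulAction.toPermHom (ℤ → G) (ℤ → G)).comp (MonoidHom.mulSingle (fun _ : ℤ => G) 0) with hφ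
  set ψ : FreeGroup (Fin 1) →* Equiv.Perm (ℤ → G) := FreeGroup.lift (fun _ => b) with hψ
  have hΦw : Monoid.Coprod.lift φ ψ w = φ g * b ^ n * (φ g)⁻¹ * (b ^ n)⁻¹ := by
    simp only [hw, ht, map_mul, map_inv, map_pow,
      Monoid.Coprod.lift_apply_inl, Monoid.Coprod.lift_apply_inr, hψ, FreeGroup.lift_apply_of]
  rw [hw1, map_one] at hΦw
  have hcomm2 : φ g * b ^ n = b ^ n * φ g :=
    commutatorElement_eq_one_iff_mul_comm.mp hΦw.symm
  have heval : ((φ g * b ^ n) (1 : ℤ → G)) (n : ℤ) = ((b ^ n * φ g) (1 : ℤ → G)) (n : ℤ) := by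
    rw [hcomm2]
  have hL : ((φ g * b ^ n) (1 : ℤ → G)) (n : ℤ) = 1 := by
    have h1 : (b ^ n) (1 : ℤ → G) = (1 : ℤ → G) := by
      funext x
      rw [hb, shift_pow_apply]
      rfl
    simp only [Equiv.Perm.mul_apply, h1, hφ, MonoidHom.comp_apply,
      MulAction.toPermHom_apply, MulAction.toPerm_apply, MonoidHom.mulSingle_apply]
    rw [smul_eq_mul, mul_one]
    exact Pi.mulSingle_eq_of_ne (M := fun _ : ℤ => G) (i' := (n : ℤ)) (i := 0)
      (by exact_mod_cast hn0) g
  have hR : ((b ^ n * φ g) (1 : ℤ → G)) (n : ℤ) = g := by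
    simp only [Equiv.Perm.mul_apply, hφ, MonoidHom.comp_apply,
      MulAction.toPermHom_apply, MulAction.toPerm_apply, MonoidHom.mulSingle_apply]
    rw [smul_eq_mul, mul_one, hb, shift_pow_apply, sub_self, Pi.mulSingle_eq_same]
  exact hg (by rw [heval, hR] at hL; exact hL)
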